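/- (Joining lemma) Let G be a graph whose vertex set is partitioned into k ≥ 2 disjoint subsets V_1,...,V_k such that: (1) G[V_i] is Hamilton connected for every i ∈ [k]; (2) every vertex in every set V_i has a neighbor in some different set V_j; and (3) there are at least three pairwise disjoint edges between every two sets V_i, V_j. Then G is Hamilton connected. -/

import Mathlib

open Matrix Finset

/-- A graph is Hamilton connected if any two distinct vertices are joined by a Hamilton path. -/
def HamConn {V : Type*} [DecidableEq V] (G : SimpleGraph V) : Prop :=
  ∀ x y : V, x ≠ y → ∃ p : G.Walk x y, p.IsHamiltonian

/-- A bipartite graph is Hamilton laceable: there is a proper 2-coloring such that any two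
vertices of different colors are joined by a Hamilton path. -/
def HamLaceable {V : Type*} [DecidableEq V] (G : SimpleGraph V) : Prop :=
  ∃ c : V → Bool, (∀ ⦃x y⦄, G.Adj x y → c x ≠ c y) ∧
    ∀ x y : V, c x ≠ c y → ∃ p : G.Walk x y, p.IsHamiltonian

/-- The undirected Cayley graph of a group with connection set `S` (acting on the left). -/
def cayley {G : Type*} [Group G] (S : Set G) : SimpleGraph G :=
  SimpleGraph.fromRel (fun x y => ∃ s ∈ S, y = s * x)

/-- The set of row operations specified by a transition graph `E` on `[n]` together with
row multiplications/divisions by `α`: elementary matrices `A_{ij}`, `A_{ij}⁻¹` for edges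
`(i,j)` of `E`, and `M_i`, `M_i⁻¹` for all `i`. -/
def ops (n : ℕ) (F : Type*) [Field F] (E : Fin n → Fin n → Prop) (α : F) :
    Set (Matrix.GeneralLinearGroup (Fin n) F) :=
  {A | (∃ i j, E i j ∧ ((A : Matrix (Fin n) (Fin n) F) = 1 + Matrix.single j i 1 ∨
        (A : Matrix (Fin n) (Fin n) F) = 1 + Matrix.single j i (-1))) ∨
      (∃ i, (A : Matrix (Fin n) (Fin n) F) = 1 + Matrix.single i i (α - 1) ∨
        (A : Matrix (Fin n) (Fin n) F) = 1 + Matrix.single i i (α⁻¹ - 1))}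

/-- Bypass transition graphs: a single vertex, or obtained from a bypass transition graph
on `[n-1]` by adding the vertex `n` with an in-edge from some `i ∈ [n-1]` and an out-edge
to some `j ∈ [n-1]`. -/
inductive IsBypass : (n : ℕ) → (Fin n → Fin n → Prop) → Prop
  | single (E : Fin 1 → Fin 1 → Prop) : IsBypass 1 E
  | step (n : ℕ) (E : Fin (n + 1) → Fin (n + 1) → Prop)
      (hin : ∃ i : Fin n, E i.castSucc (Fin.last n))
      (hout : ∃ j : Fin n, E (Fin.last n) j.castSucc)
      (hrec : IsBypass n (fun a b => E a.castSucc b.castSucc)) :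
      IsBypass (n + 1) E

set_option linter.unusedSectionVars false

namespace JoiningAux

open SimpleGraph Walk

variable {V : Type*} [DecidableEq V] (G : SimpleGraph V)

/-- From Hamilton connectivity of an induced subgraph, get a walk in `G` covering exactly `A`. -/
lemma part_ham (A : Set V) (hA : HamConn (SimpleGraph.induce A G))
    {x y : V} (hx : x ∈ A) (hy : y ∈ A) (hxy : x ≠ y) :
    ∃ p : G.Walk x y, p.support.Nodup ∧ ∀ v, v ∈ p.support ↔ v ∈ A := by
  obtain ⟨p, hp⟩ := hA ⟨x, hx⟩ ⟨y, hy⟩ (fun h => hxy (congrArg Subtype.val h))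
  refine ⟨p.map (SimpleGraph.Embedding.induce A).toHom, ?_, ?_⟩
  · show (p.map (SimpleGraph.Embedding.induce A).toHom).support.Nodup
    rw [Walk.support_map]
    exact hp.isPath.support_nodup.map Subtype.val_injective
  · intro v
    show v ∈ (p.map (SimpleGraph.Embedding.induce A).toHom).support ↔ v ∈ A
    rw [Walk.support_map, List.mem_map]
    constructor
    · rintro ⟨u, _, rfl⟩; exact u.2
    · intro hv; exact ⟨⟨v, hv⟩, hp.mem_support _, rfl⟩

lemma pick1 {α β : Type*} {a1 a2 a3 : α} {b1 b2 b3 : β}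
    (ha12 : a1 ≠ a2) (ha13 : a1 ≠ a3) (ha23 : a2 ≠ a3)
    (hb12 : b1 ≠ b2) (hb13 : b1 ≠ b3) (hb23 : b2 ≠ b3) (x : α) (y : β) :
    (a1 ≠ x ∧ b1 ≠ y) ∨ (a2 ≠ x ∧ b2 ≠ y) ∨ (a3 ≠ x ∧ b3 ≠ y) := by
  have A12 : ¬(a1 = x ∧ a2 = x) := fun ⟨p, q⟩ => ha12 (p.trans q.symm)
  have A13 : ¬(a1 = x ∧ a3 = x) := fun ⟨p, q⟩ => ha13 (p.trans q.symm)
  have A23 : ¬(a2 = x ∧ a3 = x) := fun ⟨p, q⟩ => ha23 (p.trans q.symm)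
  have B12 : ¬(b1 = y ∧ b2 = y) := fun ⟨p, q⟩ => hb12 (p.trans q.symm)
  have B13 : ¬(b1 = y ∧ b3 = y) := fun ⟨p, q⟩ => hb13 (p.trans q.symm)
  have B23 : ¬(b2 = y ∧ b3 = y) := fun ⟨p, q⟩ => hb23 (p.trans q.symm)
  tauto

/-- Splitting a walk along one of its darts. -/
lemma split_dart : ∀ {a b : V} (q : G.Walk a b) (d : G.Dart), d ∈ q.darts →
    ∃ (q1 : G.Walk a d.fst) (q2 : G.Walk d.snd b),
      q.support = q1.support ++ q2.support := by
  intro a b q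
  induction q with
  | nil => intro d hd; simp [Walk.darts_nil] at hd
  | cons h p ih =>
    intro d hd
    rw [Walk.darts_cons, List.mem_cons] at hd
    rcases hd with rfl | hd
    · exact ⟨Walk.nil, p, by simp⟩
    · obtain ⟨q1, q2, hq⟩ := ih d hd
      exact ⟨Walk.cons h q1, q2, by simp [hq]⟩

/-- Propagation of a transitive relation on outside-neighbours along a walk on which
every dart "fails". -/
lemma propagate (A : Set V) (r : V → V → Prop) (htr : Transitive r)
    (hNout : ∀ v ∈ A, ∃ ζ, G.Adj v ζ ∧ ζ ∉ A) :
    ∀ {a b : V} (q : G.Walk a b),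
      (∀ v ∈ q.support, v ∈ A) →
      (∀ d ∈ q.darts, ∀ ζ1 ζ2, G.Adj d.fst ζ1 → ζ1 ∉ A → G.Adj d.snd ζ2 → ζ2 ∉ A → r ζ1 ζ2) →
      ∀ u ∈ q.support, u ≠ b → ∀ ζ ξ, G.Adj u ζ → ζ ∉ A → G.Adj b ξ → ξ ∉ A → r ζ ξ := by
  intro a b q
  induction q with
  | nil =>
    intro _ _ u hu hub
    rw [Walk.support_nil, List.mem_singleton] at hu
    exact absurd hu hub
  | @cons a c b h p ih =>
    intro hsup hfail u hu hub ζ ξ hζ hζA hξ hξA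
    rw [Walk.support_cons, List.mem_cons] at hu
    have hdfirst := hfail ⟨(a, c), h⟩ (by rw [Walk.darts_cons]; exact List.mem_cons_self)
    have hsup' : ∀ v ∈ p.support, v ∈ A := fun v hv => hsup v (by simp [hv])
    have hfail' : ∀ d ∈ p.darts, ∀ ζ1 ζ2,
        G.Adj d.fst ζ1 → ζ1 ∉ A → G.Adj d.snd ζ2 → ζ2 ∉ A → r ζ1 ζ2 :=
      fun d hd => hfail d (by rw [Walk.darts_cons]; exact List.mem_cons_of_mem _ hd)
    rcases hu with rfl | hu
    · by_cases hcb : c = b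
      · subst hcb
        exact hdfirst ζ ξ hζ hζA hξ hξA
      · have hcA : c ∈ A := hsup c (by simp)
        obtain ⟨ζ', hζ', hζ'A⟩ := hNout c hcA
        exact htr (hdfirst ζ ζ' hζ hζA hζ' hζ'A)
          (ih hsup' hfail' c p.start_mem_support hcb ζ' ξ hζ' hζ'A hξ hξA)
    · exact ih hsup' hfail' u hu hub ζ ξ hζ hζA hξ hξA

/-- Joining a chain of parts when the endpoints lie in different parts. -/
lemma chainWalk {k : ℕ} (P : Fin k → Set V)
    (hdisj : ∀ i j, i ≠ j → Disjoint (P i) (P j))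
    (h1 : ∀ i, HamConn (SimpleGraph.induce (P i) G))
    (h3 : ∀ i j, i ≠ j → ∃ x1 x2 x3 y1 y2 y3 : V,
      x1 ∈ P i ∧ x2 ∈ P i ∧ x3 ∈ P i ∧ y1 ∈ P j ∧ y2 ∈ P j ∧ y3 ∈ P j ∧
      G.Adj x1 y1 ∧ G.Adj x2 y2 ∧ G.Adj x3 y3 ∧
      x1 ≠ x2 ∧ x1 ≠ x3 ∧ x2 ≠ x3 ∧ y1 ≠ y2 ∧ y1 ≠ y3 ∧ y2 ≠ y3) :
    ∀ (n : ℕ) (s : Finset (Fin k)), s.card ≤ n → ∀ i j, i ∈ s → j ∈ s → i ≠ j →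
      ∀ x ∈ P i, ∀ y ∈ P j, ∃ p : G.Walk x y, p.support.Nodup ∧
        ∀ v, v ∈ p.support ↔ ∃ t ∈ s, v ∈ P t := by
  intro n
  induction n with
  | zero =>
    intro s hs i j hi
    rw [Nat.le_zero, Finset.card_eq_zero] at hs
    subst hs
    simp at hi
  | succ n ih =>
    intro s hs i j hi hj hij x hx y hy
    set s' := s.erase i with hs'def
    have hjs' : j ∈ s' := Finset.mem_erase.2 ⟨fun h => hij h.symm, hj⟩
    have hs'card : s'.card ≤ n := by
      have hc : s'.card = s.card - 1 := by rw [hs'def]; exact Finset.card_erase_of_mem hi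
      omega
    obtain ⟨t, hts', Hrec⟩ : ∃ t ∈ s', ∀ b ∈ P t, b ≠ y →
        ∃ p2 : G.Walk b y, p2.support.Nodup ∧ ∀ v, v ∈ p2.support ↔ ∃ u ∈ s', v ∈ P u := by
      by_cases ht : ∃ t ∈ s', t ≠ j
      · obtain ⟨t, hts', htj⟩ := ht
        exact ⟨t, hts', fun b hb _ => ih s' hs'card t j hts' hjs' htj b hb y hy⟩
      · push_neg at ht
        refine ⟨j, hjs', fun b hb hby => ?_⟩
        obtain ⟨p2, h2a, h2b⟩ := part_ham G (P j) (h1 j) hb hy hby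
        refine ⟨p2, h2a, fun v => ?_⟩
        rw [h2b]
        constructor
        · intro hv; exact ⟨j, hjs', hv⟩
        · rintro ⟨u, hu, hvu⟩; rwa [ht u hu] at hvu
    have hti : t ≠ i := (Finset.mem_erase.1 hts').1
    obtain ⟨a1, a2, a3, b1, b2, b3, ha1, ha2, ha3, hb1, hb2, hb3, e1, e2, e3,
      da12, da13, da23, db12, db13, db23⟩ := h3 i t (fun h => hti h.symm)
    obtain ⟨a, b, haP, hbP, hab, hax, hby⟩ :
        ∃ a b, a ∈ P i ∧ b ∈ P t ∧ G.Adj a b ∧ a ≠ x ∧ b ≠ y := by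
      rcases pick1 da12 da13 da23 db12 db13 db23 x y with ⟨p, q⟩ | ⟨p, q⟩ | ⟨p, q⟩
      exacts [⟨a1, b1, ha1, hb1, e1, p, q⟩, ⟨a2, b2, ha2, hb2, e2, p, q⟩,
        ⟨a3, b3, ha3, hb3, e3, p, q⟩]
    obtain ⟨p2, hp2nd, hp2mem⟩ := Hrec b hbP hby
    obtain ⟨p1, hp1nd, hp1mem⟩ := part_ham G (P i) (h1 i) hx haP (fun h => hax h.symm)
    refine ⟨p1.append (Walk.cons hab p2), ?_, ?_⟩
    all_goals rw [show (p1.append (Walk.cons hab p2)).support = p1.support ++ p2.support by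
      rw [Walk.support_append, Walk.support_cons, List.tail_cons]]
    · refine hp1nd.append hp2nd ?_
      intro v hv1 hv2
      obtain ⟨u, hu, hvu⟩ := (hp2mem v).1 hv2
      have hui : u ≠ i := (Finset.mem_erase.1 hu).1
      exact Set.disjoint_left.mp (hdisj u i hui) hvu ((hp1mem v).1 hv1)
    · intro v
      rw [List.mem_append, hp1mem, hp2mem]
      constructor
      · rintro (hv | ⟨u, hu, hvu⟩)
        · exact ⟨i, hi, hv⟩
        · exact ⟨u, Finset.mem_of_mem_erase hu, hvu⟩
      · rintro ⟨u, hu, hvu⟩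
        by_cases hui : u = i
        · subst hui; exact Or.inl hvu
        · exact Or.inr ⟨u, Finset.mem_erase.2 ⟨hui, hu⟩, hvu⟩

end JoiningAux


/-- Joining lemma: if the vertex set of `G` is partitioned into `k ≥ 2` sets
whose induced subgraphs are Hamilton connected, every vertex has a neighbor in another set,
and every two sets are joined by at least three pairwise disjoint edges, then `G` is
Hamilton connected. -/
theorem joining_lemma {V : Type*} [Fintype V] [DecidableEq V] (G : SimpleGraph V)
    (k : ℕ) (hk : 2 ≤ k) (P : Fin k → Set V)
    (hdisj : ∀ i j, i ≠ j → Disjoint (P i) (P j))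
    (hcover : ∀ v : V, ∃ i, v ∈ P i)
    (h1 : ∀ i, HamConn (SimpleGraph.induce (P i) G))
    (h2 : ∀ i, ∀ x ∈ P i, ∃ j, j ≠ i ∧ ∃ y ∈ P j, G.Adj x y)
    (h3 : ∀ i j, i ≠ j → ∃ x1 x2 x3 y1 y2 y3 : V,
      x1 ∈ P i ∧ x2 ∈ P i ∧ x3 ∈ P i ∧ y1 ∈ P j ∧ y2 ∈ P j ∧ y3 ∈ P j ∧
      G.Adj x1 y1 ∧ G.Adj x2 y2 ∧ G.Adj x3 y3 ∧
      x1 ≠ x2 ∧ x1 ≠ x3 ∧ x2 ≠ x3 ∧ y1 ≠ y2 ∧ y1 ≠ y3 ∧ y2 ≠ y3) :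
    HamConn G := by
  classical
  have chain := JoiningAux.chainWalk G P hdisj h1 h3
  -- the part containing a vertex
  let pt : V → Fin k := fun v => (hcover v).choose
  have pt_mem : ∀ v, v ∈ P (pt v) := fun v => (hcover v).choose_spec
  have pt_unique : ∀ v t, v ∈ P t → pt v = t := by
    intro v t h
    by_contra hne
    exact Set.disjoint_left.mp (hdisj _ t hne) (pt_mem v) h
  intro x y hxy
  by_cases hpp : pt x = pt y
  case neg =>
    -- endpoints in different parts
    obtain ⟨p, hnd, hmem⟩ := chain Finset.univ.card Finset.univ le_rfl (pt x) (pt y)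
      (Finset.mem_univ _) (Finset.mem_univ _) hpp x (pt_mem x) y (pt_mem y)
    refine ⟨p, fun v => List.count_eq_one_of_mem hnd ?_⟩
    rw [hmem]
    exact ⟨pt v, Finset.mem_univ _, pt_mem v⟩
  case pos =>
    -- endpoints in the same part
    set p0 := pt x with hp0
    set A : Set V := P p0 with hA
    have hx : x ∈ A := pt_mem x
    have hy : y ∈ A := by rw [hA, hpp]; exact pt_mem y
    obtain ⟨q, hqnd, hqmem⟩ := JoiningAux.part_ham G A (h1 p0) hx hy hxy
    have hptA : ∀ z, z ∉ A → pt z ≠ p0 := fun z hz h => hz (by rw [hA, ← h]; exact pt_mem z)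
    have hNout : ∀ v ∈ A, ∃ ζ, G.Adj v ζ ∧ ζ ∉ A := by
      intro v hv
      obtain ⟨j, hj, z, hz, hadj⟩ := h2 p0 v hv
      exact ⟨z, hadj, fun hzA => Set.disjoint_left.mp (hdisj j p0 hj) hz hzA⟩
    -- outside Hamilton walks
    let OUT : V → V → Prop := fun ζ1 ζ2 => ∃ W : G.Walk ζ1 ζ2, W.support.Nodup ∧
      ∀ v, v ∈ W.support ↔ v ∉ A
    have claim : ∃ d ∈ q.darts, ∃ ζ1 ζ2, (G.Adj d.fst ζ1 ∧ ζ1 ∉ A) ∧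
        (G.Adj d.snd ζ2 ∧ ζ2 ∉ A) ∧ OUT ζ1 ζ2 := by
      by_contra hcon
      push_neg at hcon
      obtain ⟨ξ0, hξ0adj, hξ0A⟩ := hNout y hy
      have ht0 : pt ξ0 ≠ p0 := hptA _ hξ0A
      have hqsub : ∀ v ∈ q.support, v ∈ A := fun v hv => (hqmem v).1 hv
      -- a failing pair of outside neighbours lies in a single part
      have hsame : ∀ ζ1 ζ2, ζ1 ∉ A → ζ2 ∉ A → ¬ OUT ζ1 ζ2 → pt ζ1 = pt ζ2 := by
        intro ζ1 ζ2 h1A h2A hno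
        by_contra hne
        apply hno
        obtain ⟨W, hWnd, hWmem⟩ := chain Finset.univ.card (Finset.univ.erase p0)
          (Finset.card_le_card (Finset.subset_univ _)) (pt ζ1) (pt ζ2)
          (Finset.mem_erase.2 ⟨hptA _ h1A, Finset.mem_univ _⟩)
          (Finset.mem_erase.2 ⟨hptA _ h2A, Finset.mem_univ _⟩)
          hne ζ1 (pt_mem ζ1) ζ2 (pt_mem ζ2)
        refine ⟨W, hWnd, fun v => ?_⟩
        rw [hWmem]
        constructor
        · rintro ⟨t, hts, hvt⟩
          exact fun hvA =>
            Set.disjoint_left.mp (hdisj t p0 (Finset.mem_erase.1 hts).1) hvt hvA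
        · intro hv
          exact ⟨pt v, Finset.mem_erase.2 ⟨hptA _ hv, Finset.mem_univ _⟩, pt_mem v⟩
      by_cases hbig : ∃ s : Fin k, s ≠ p0 ∧ s ≠ pt ξ0
      · -- at least three parts: all outside neighbours along q share the part of ξ0
        have hfail : ∀ d ∈ q.darts, ∀ ζ1 ζ2,
            G.Adj d.fst ζ1 → ζ1 ∉ A → G.Adj d.snd ζ2 → ζ2 ∉ A → pt ζ1 = pt ζ2 :=
          fun d hd ζ1 ζ2 a1 n1 a2 n2 =>
            hsame ζ1 ζ2 n1 n2 (hcon d hd ζ1 ζ2 ⟨a1, n1⟩ ⟨a2, n2⟩)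
        have hprop := JoiningAux.propagate G A (fun a b => pt a = pt b)
          (fun _ _ _ hab hbc => hab.trans hbc) hNout q hqsub hfail
        obtain ⟨s, hspx, hst0⟩ := hbig
        obtain ⟨a1, a2, a3, b1, b2, b3, ha1, ha2, ha3, hb1, hb2, hb3, e1, e2, e3,
          da12, da13, da23, _, _, _⟩ := h3 p0 s (fun h => hspx h.symm)
        obtain ⟨a, b, haA, hbs, hadj, hay⟩ :
            ∃ a b, a ∈ P p0 ∧ b ∈ P s ∧ G.Adj a b ∧ a ≠ y := by
          by_cases h : a1 = y
          · exact ⟨a2, b2, ha2, hb2, e2, fun hh => da12 (h.trans hh.symm)⟩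
          · exact ⟨a1, b1, ha1, hb1, e1, h⟩
        have hbA : b ∉ A := fun hbA => Set.disjoint_left.mp (hdisj s p0 hspx) hbs hbA
        have := hprop a ((hqmem a).2 haA) hay b ξ0 hadj hbA hξ0adj hξ0A
        exact hst0 ((pt_unique b s hbs).symm.trans this)
      · -- exactly two parts involved: outside = P (pt ξ0)
        push_neg at hbig
        have hout2 : ∀ ζ1 ζ2, ζ1 ∉ A → ζ2 ∉ A → ζ1 ≠ ζ2 → OUT ζ1 ζ2 := by
          intro ζ1 ζ2 hA1 hA2 hne
          have hm : ∀ z, z ∉ A → z ∈ P (pt ξ0) := by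
            intro z hz
            have := hbig (pt z) (hptA _ hz)
            exact this ▸ pt_mem z
          obtain ⟨W, hWnd, hWmem⟩ := JoiningAux.part_ham G (P (pt ξ0)) (h1 _)
            (hm ζ1 hA1) (hm ζ2 hA2) hne
          refine ⟨W, hWnd, fun v => ?_⟩
          rw [hWmem]
          constructor
          · intro hv
            exact fun hvA => Set.disjoint_left.mp (hdisj (pt ξ0) p0 ht0) hv hvA
          · exact hm v
        have hfail : ∀ d ∈ q.darts, ∀ ζ1 ζ2,
            G.Adj d.fst ζ1 → ζ1 ∉ A → G.Adj d.snd ζ2 → ζ2 ∉ A → ζ1 = ζ2 := by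
          intro d hd ζ1 ζ2 a1 n1 a2 n2
          by_contra hne
          exact hcon d hd ζ1 ζ2 ⟨a1, n1⟩ ⟨a2, n2⟩ (hout2 ζ1 ζ2 n1 n2 hne)
        have hprop := JoiningAux.propagate G A (fun a b => a = b)
          (fun _ _ _ hab hbc => hab.trans hbc) hNout q hqsub hfail
        obtain ⟨a1, a2, a3, b1, b2, b3, ha1, ha2, ha3, hb1, hb2, hb3, e1, e2, e3,
          da12, da13, da23, db12, db13, db23⟩ := h3 p0 (pt ξ0) (fun h => ht0 h.symm)
        obtain ⟨a, b, a', b', haA, hbm, hadj, hay, haA', hbm', hadj', hay', hbb⟩ :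
            ∃ a b a' b', a ∈ P p0 ∧ b ∈ P (pt ξ0) ∧ G.Adj a b ∧ a ≠ y ∧
              a' ∈ P p0 ∧ b' ∈ P (pt ξ0) ∧ G.Adj a' b' ∧ a' ≠ y ∧ b ≠ b' := by
          by_cases h : a1 = y
          · exact ⟨a2, b2, a3, b3, ha2, hb2, e2, fun hh => da12 (h.trans hh.symm),
              ha3, hb3, e3, fun hh => da13 (h.trans hh.symm), db23⟩
          · by_cases h' : a2 = y
            · exact ⟨a1, b1, a3, b3, ha1, hb1, e1, h,
                ha3, hb3, e3, fun hh => da23 (h'.trans hh.symm), db13⟩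
            · exact ⟨a1, b1, a2, b2, ha1, hb1, e1, h, ha2, hb2, e2, h', db12⟩
        have hbA : ∀ z ∈ P (pt ξ0), z ∉ A :=
          fun z hz hzA => Set.disjoint_left.mp (hdisj (pt ξ0) p0 ht0) hz hzA
        have hr1 := hprop a ((hqmem a).2 haA) hay b ξ0 hadj (hbA b hbm) hξ0adj hξ0A
        have hr2 := hprop a' ((hqmem a').2 haA') hay' b' ξ0 hadj' (hbA b' hbm') hξ0adj hξ0A
        exact hbb (hr1.trans hr2.symm)
    -- assemble the Hamilton path
    obtain ⟨d, hd, ζ1, ζ2, ⟨hadj1, hζ1A⟩, ⟨hadj2, hζ2A⟩, W, hWnd, hWmem⟩ := claim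
    obtain ⟨q1, q2, hsplit⟩ := JoiningAux.split_dart G q d hd
    refine ⟨q1.append (SimpleGraph.Walk.cons hadj1
      (W.append (SimpleGraph.Walk.cons hadj2.symm q2))), ?_⟩
    have hsupp : (q1.append (SimpleGraph.Walk.cons hadj1
        (W.append (SimpleGraph.Walk.cons hadj2.symm q2)))).support =
        q1.support ++ (W.support ++ q2.support) := by
      rw [SimpleGraph.Walk.support_append, SimpleGraph.Walk.support_cons, List.tail_cons,
        SimpleGraph.Walk.support_append, SimpleGraph.Walk.support_cons, List.tail_cons]
    have hq1A : ∀ v ∈ q1.support, v ∈ A := by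
      intro v hv
      exact (hqmem v).1 (by rw [hsplit]; exact List.mem_append_left _ hv)
    have hq2A : ∀ v ∈ q2.support, v ∈ A := by
      intro v hv
      exact (hqmem v).1 (by rw [hsplit]; exact List.mem_append_right _ hv)
    have hqnd' : (q1.support ++ q2.support).Nodup := by rwa [hsplit] at hqnd
    rw [List.nodup_append] at hqnd'
    obtain ⟨hnd1, hnd2, hdj12⟩ := hqnd'
    intro v
    apply List.count_eq_one_of_mem
    · rw [hsupp]
      refine hnd1.append (hWnd.append hnd2 ?_) ?_
      · intro u hu hu2
        exact ((hWmem u).1 hu) (hq2A u hu2)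
      · intro u hu hu2
        rcases List.mem_append.1 hu2 with huW | huq2
        · exact ((hWmem u).1 huW) (hq1A u hu)
        · exact hdj12 u hu u huq2 rfl
    · rw [hsupp]
      by_cases hvA : v ∈ A
      · have : v ∈ q1.support ++ q2.support := by rw [← hsplit]; exact (hqmem v).2 hvA
        rcases List.mem_append.1 this with h | h
        · exact List.mem_append_left _ h
        · exact List.mem_append_right _ (List.mem_append_right _ h)
      · exact List.mem_append_right _ (List.mem_append_left _ ((hWmem v).2 hvA))
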